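/- Let C ⊆ ℕ^p be an integer cone and ⪯ an admissible total order on ℕ^p. Then every ordinary C-semigroup S_c = {0} ∪ {x ∈ C : c ⪯ x} (c ∈ C) is a saturated semigroup. -/
import Mathlib


open Set BigOperators

/-- `C` is an integer cone: the intersection with `ℕ^p` of the set of nonnegative
real linear combinations of a finite set `A ⊆ ℕ^p`. -/
def IsIntegerCone (p : ℕ) (C : Set (Fin p → ℕ)) : Prop :=
  ∃ A : Finset (Fin p → ℕ),
    C = {x : Fin p → ℕ | ∃ l : (Fin p → ℕ) → ℝ,
      (∀ a, 0 ≤ l a) ∧ ∀ i, (x i : ℝ) = ∑ a ∈ A, l a * (a i : ℝ)}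

/-- An admissible total order on `ℕ^p`: total, compatible with addition,
with `0` minimum, and with finite down-sets. -/
structure AdmissibleOrder (p : ℕ) where
  le : (Fin p → ℕ) → (Fin p → ℕ) → Prop
  le_refl : ∀ x, le x x
  le_antisymm : ∀ x y, le x y → le y x → x = y
  le_trans : ∀ x y z, le x y → le y z → le x z
  le_total : ∀ x y, le x y ∨ le y x
  add_right : ∀ x y z, le x y → le (x + z) (y + z)
  zero_le : ∀ x, le 0 x
  finite_le : ∀ f, {x : Fin p → ℕ | le x f}.Finite

/-- Strict version of an admissible order. -/
def AdmissibleOrder.lt {p : ℕ} (O : AdmissibleOrder p) (x y : Fin p → ℕ) : Prop :=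
  O.le x y ∧ x ≠ y

/-- `S` is a `C`-semigroup: a submonoid of `ℕ^p` contained in `C` with finite complement in `C`. -/
def IsCSemigroup {p : ℕ} (C S : Set (Fin p → ℕ)) : Prop :=
  S ⊆ C ∧ 0 ∈ S ∧ (∀ x ∈ S, ∀ y ∈ S, x + y ∈ S) ∧ (C \ S).Finite

/-- `f` is the Frobenius element of `S`: the `⪯`-maximum of `C \ S`. -/
def IsFrob {p : ℕ} (O : AdmissibleOrder p) (C S : Set (Fin p → ℕ)) (f : Fin p → ℕ) : Prop :=
  f ∈ C \ S ∧ ∀ x ∈ C \ S, O.le x f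

/-- `B(f) = {x ∈ C : f - x ∈ C}`. -/
def BSet {p : ℕ} (C : Set (Fin p → ℕ)) (f : Fin p → ℕ) : Set (Fin p → ℕ) :=
  {x | x ∈ C ∧ ∃ y ∈ C, x + y = f}

/-- `N(f) = #{x ∈ C \ {0} : x ⪯ f}`. -/
noncomputable def NNum {p : ℕ} (O : AdmissibleOrder p) (C : Set (Fin p → ℕ)) (f : Fin p → ℕ) : ℕ :=
  {x | x ∈ C ∧ x ≠ 0 ∧ O.le x f}.ncard

/-- The genus of `S`: the number of gaps `#(C \ S)`. -/
noncomputable def genusOf {p : ℕ} (C S : Set (Fin p → ℕ)) : ℕ := (C \ S).ncard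

/-- The number of small elements `n(S) = #{s ∈ S : s ≺ Fb(S)}`; an element is smaller than
the Frobenius element iff it is strictly smaller than some gap. -/
noncomputable def smallCount {p : ℕ} (O : AdmissibleOrder p) (C S : Set (Fin p → ℕ)) : ℕ :=
  {s | s ∈ S ∧ ∃ h ∈ C \ S, O.lt s h}.ncard

/-- The minimal generating set of `S`. -/
def msg {p : ℕ} (S : Set (Fin p → ℕ)) : Set (Fin p → ℕ) :=
  (S \ {0}) \ {x | ∃ a ∈ S \ {0}, ∃ b ∈ S \ {0}, a + b = x}

/-- `S` is a `B`-semigroup with respect to `f`. -/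
def IsBSemigroup {p : ℕ} (O : AdmissibleOrder p) (C S : Set (Fin p → ℕ)) (f : Fin p → ℕ) : Prop :=
  IsCSemigroup C S ∧ IsFrob O C S f ∧ C \ BSet C f ⊆ S

/-- `a = α(S)`, the `⪯`-minimum of `(S \ {0}) ∩ B(f)`, with the convention `α(S) = f`
when `S ∩ B(f) = {0}`. -/
def IsAlpha {p : ℕ} (O : AdmissibleOrder p) (C S : Set (Fin p → ℕ)) (f a : Fin p → ℕ) : Prop :=
  (a ∈ S ∧ a ≠ 0 ∧ a ∈ BSet C f ∧ ∀ x ∈ S, x ≠ 0 → x ∈ BSet C f → O.le a x)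
  ∨ ((∀ x ∈ S ∩ BSet C f, x = 0) ∧ a = f)

/-- `x` is a special gap of `T`. -/
def SpecialGap {p : ℕ} (C T : Set (Fin p → ℕ)) (x : Fin p → ℕ) : Prop :=
  x ∈ C \ T ∧ x + x ∈ T ∧ ∀ t ∈ T, t ≠ 0 → x + t ∈ T

/-- `l = λ(S)`, the `⪯`-largest gap of `S` lying outside `B(f)` (no convention case). -/
def IsLambdaGap {p : ℕ} (O : AdmissibleOrder p) (C S : Set (Fin p → ℕ)) (f l : Fin p → ℕ) : Prop :=
  l ∈ C \ S ∧ l ∉ BSet C f ∧ ∀ x ∈ C \ S, x ∉ BSet C f → O.le x l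

/-- `l = λ(S)`, with the convention `λ(S) = 0` when `S` has no gap outside `B(f)`. -/
def IsLambda {p : ℕ} (O : AdmissibleOrder p) (C S : Set (Fin p → ℕ)) (f l : Fin p → ℕ) : Prop :=
  IsLambdaGap O C S f l ∨ ((∀ x ∈ C \ S, x ∈ BSet C f) ∧ l = 0)

/-- `x ≤_C y` iff `y - x ∈ C`. -/
def leC {p : ℕ} (C : Set (Fin p → ℕ)) (x y : Fin p → ℕ) : Prop := ∃ d ∈ C, x + d = y

/-- The ordinary `C`-semigroup `S_c = {0} ∪ {x ∈ C : c ⪯ x}`. -/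
def ordinarySemigroup {p : ℕ} (O : AdmissibleOrder p) (C : Set (Fin p → ℕ))
    (c : Fin p → ℕ) : Set (Fin p → ℕ) :=
  insert 0 {x | x ∈ C ∧ O.le c x}

/-- `S` is an arf semigroup in `C`. -/
def ArfSemigroup {p : ℕ} (C S : Set (Fin p → ℕ)) : Prop :=
  ∀ x ∈ S, ∀ y ∈ S, ∀ z ∈ S, leC C z y → leC C y x →
    ∀ w : Fin p → ℕ, w + z = x + y → w ∈ S

/-- `S` is a saturated semigroup in `C`: whenever `s, s₁, …, s_r ∈ S` with `s_i ≤_C s`,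
and `z : Fin r → ℤ` with `z₁s₁ + ⋯ + z_rs_r ∈ C` (as an element `t` of `ℕ^p`),
then `s + z₁s₁ + ⋯ + z_rs_r = s + t ∈ S`. -/
def SaturatedSemigroup {p : ℕ} (C S : Set (Fin p → ℕ)) : Prop :=
  ∀ (r : ℕ) (s : Fin p → ℕ) (si : Fin r → (Fin p → ℕ)) (z : Fin r → ℤ),
    s ∈ S → (∀ i, si i ∈ S) → (∀ i, leC C (si i) s) →
    ∀ t ∈ C, (∀ j, (t j : ℤ) = ∑ i, z i * (si i j : ℤ)) → s + t ∈ S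

lemma cone_add {p : ℕ} {C : Set (Fin p → ℕ)} (hC : IsIntegerCone p C)
    {x y : Fin p → ℕ} (hx : x ∈ C) (hy : y ∈ C) : x + y ∈ C := by
  obtain ⟨A, rfl⟩ := hC
  obtain ⟨l, hl, hlx⟩ := hx
  obtain ⟨m, hm, hmy⟩ := hy
  refine ⟨fun a => l a + m a, fun a => add_nonneg (hl a) (hm a), fun i => ?_⟩
  simp only [Pi.add_apply, Nat.cast_add, add_mul, Finset.sum_add_distrib, hlx i, hmy i]

/-- Every ordinary C-semigroup is a saturated semigroup. -/
theorem statement13 (p : ℕ) (hp : 0 < p) (C : Set (Fin p → ℕ)) (hC : IsIntegerCone p C)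
    (O : AdmissibleOrder p) (c : Fin p → ℕ) (hc : c ∈ C) :
    SaturatedSemigroup C (ordinarySemigroup O C c) := by
  intro r s si z hs hsi hle t ht htz
  rcases hs with rfl | hs
  · -- s = 0, so all si i = 0, hence t = 0
    have hsi0 : ∀ i, si i = 0 := by
      intro i
      obtain ⟨d, _, hd0⟩ := hle i
      funext j
      have := congrFun hd0 j
      simp only [Pi.add_apply, Pi.zero_apply] at this ⊢
      omega
    have ht0 : t = 0 := by
      funext j
      have := htz j
      simp [hsi0] at this
      exact_mod_cast this
    simp [ht0, ordinarySemigroup]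
  · obtain ⟨hsC, hcs⟩ := hs
    have hadd : s + t ∈ C := cone_add hC hsC ht
    have hst : O.le s (s + t) := by
      have := O.add_right 0 t s (O.zero_le t)
      simpa [add_comm] using this
    exact Set.mem_insert_iff.mpr (Or.inr ⟨hadd, O.le_trans _ _ _ hcs hst⟩)
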